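/- Let A_1, A_2 ∈ ℝ^{n×n} and B_1, B_2 ∈ ℝ^{n×p}, and let D ⊆ {(λ,μ) ∈ ℂ×ℂ : Re λ < 0 and Re μ < 0}. If the pairs (A_1,B_1) and (A_2,B_2) are feedback rectifiable over D, then there exist F_1, F_2 ∈ ℝ^{p×n} and a Hermitian positive definite matrix P ∈ ℂ^{n×n} such that (A_q + B_q F_q)ᴴ P + P (A_q + B_q F_q) is negative definite for q = 1, 2 (i.e. the closed-loop subsystems admit a common quadratic Lyapunov function, so the switched closed-loop system is asymptotically stable for arbitrary switching). -/

import Mathlib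

open Matrix
open scoped ComplexOrder

noncomputable section

/-- Entrywise coercion of a real matrix to a complex matrix. -/
def mapC {n m : ℕ} (A : Matrix (Fin n) (Fin m) ℝ) : Matrix (Fin n) (Fin m) ℂ :=
  A.map (fun x => (x : ℂ))

/-- The pairs `(A₁,B₁)` and `(A₂,B₂)` are feedback rectifiable over `D ⊆ ℂ × ℂ`. -/
def FeedbackRectifiable {n p : ℕ} (A₁ A₂ : Matrix (Fin n) (Fin n) ℝ)
    (B₁ B₂ : Matrix (Fin n) (Fin p) ℝ) (D : Set (ℂ × ℂ)) : Prop :=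
  ∃ (F₁ F₂ : Matrix (Fin p) (Fin n) ℝ) (lm : Fin n → ℂ × ℂ) (v : Fin n → Fin n → ℂ),
    (∀ i, lm i ∈ D) ∧ LinearIndependent ℂ v ∧
    (∀ i, (mapC (A₁ + B₁ * F₁)).mulVec (v i) = (lm i).1 • v i) ∧
    (∀ i, (mapC (A₂ + B₂ * F₂)).mulVec (v i) = (lm i).2 • v i)

lemma posdef_conj {n : ℕ} {A B : Matrix (Fin n) (Fin n) ℂ} (hA : A.PosDef) (hB : IsUnit B) :
    (Bᴴ * A * B).PosDef := by
  refine Matrix.posDef_iff_dotProduct_mulVec.mpr ⟨Matrix.isHermitian_conjTranspose_mul_mul B hA.1, fun x hx => ?_⟩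
  have hBx : B.mulVec x ≠ 0 := fun h =>
    hx (Matrix.mulVec_injective_iff_isUnit.mpr hB (h.trans (Matrix.mulVec_zero B).symm))
  have := hA.dotProduct_mulVec_pos hBx
  convert this using 1
  rw [Matrix.mul_assoc, ← Matrix.mulVec_mulVec, dotProduct_mulVec,
    ← Matrix.star_mulVec, ← Matrix.mulVec_mulVec]

lemma eigen_to_mul {n : ℕ} (M : Matrix (Fin n) (Fin n) ℂ) (v : Fin n → Fin n → ℂ)
    (l : Fin n → ℂ) (h : ∀ i, M.mulVec (v i) = l i • v i) :
    M * (Matrix.of v)ᵀ = (Matrix.of v)ᵀ * Matrix.diagonal l := by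
  ext i j
  have := congrFun (h j) i
  simpa [Matrix.mul_apply, Matrix.mulVec, dotProduct, Matrix.diagonal_apply,
    Finset.sum_ite_eq', mul_comm] using this

lemma lyap_eq {n : ℕ} (M V : Matrix (Fin n) (Fin n) ℂ) (l : Fin n → ℂ)
    (hV : IsUnit V) (hMV : M * V = V * Matrix.diagonal l) :
    -(Mᴴ * (V⁻¹ᴴ * V⁻¹) + (V⁻¹ᴴ * V⁻¹) * M)
      = V⁻¹ᴴ * Matrix.diagonal (fun i => -(star (l i) + l i)) * V⁻¹ := by
  have hdet : IsUnit V.det := (Matrix.isUnit_iff_isUnit_det V).mp hV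
  have hVi : V⁻¹ * V = 1 := Matrix.nonsing_inv_mul V hdet
  have hViH : Vᴴ * V⁻¹ᴴ = 1 := by
    rw [← Matrix.conjTranspose_mul, hVi, Matrix.conjTranspose_one]
  have hM : M = V * Matrix.diagonal l * V⁻¹ := by
    rw [← hMV, Matrix.mul_nonsing_inv_cancel_right _ _ hdet]
  have e1 : Mᴴ * (V⁻¹ᴴ * V⁻¹) = V⁻¹ᴴ * Matrix.diagonal (fun i => star (l i)) * V⁻¹ := by
    rw [hM]
    simp only [Matrix.conjTranspose_mul, Matrix.mul_assoc, Matrix.diagonal_conjTranspose]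
    rw [← Matrix.mul_assoc Vᴴ V⁻¹ᴴ V⁻¹, hViH, Matrix.one_mul]
    rfl
  have e2 : (V⁻¹ᴴ * V⁻¹) * M = V⁻¹ᴴ * Matrix.diagonal l * V⁻¹ := by
    rw [hM]
    simp only [Matrix.mul_assoc]
    rw [← Matrix.mul_assoc V⁻¹ V (Matrix.diagonal l * V⁻¹), hVi, Matrix.one_mul]
  have hd : Matrix.diagonal (fun i => -(star (l i) + l i))
      = -(Matrix.diagonal (fun i => star (l i)) + Matrix.diagonal l) := by
    ext i j
    by_cases h : i = j <;> simp [Matrix.diagonal_apply, h]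
  rw [e1, e2, hd, Matrix.mul_neg, Matrix.neg_mul, Matrix.mul_add, Matrix.add_mul]


/-- Feedback rectifiability over a set of eigenvalue pairs with negative real parts
yields feedback matrices and a common quadratic Lyapunov function for the closed-loop
subsystems. -/
theorem feedback_rectifiable_common_lyapunov
    {n p : ℕ} (A₁ A₂ : Matrix (Fin n) (Fin n) ℝ) (B₁ B₂ : Matrix (Fin n) (Fin p) ℝ)
    (D : Set (ℂ × ℂ)) (hD : ∀ d ∈ D, d.1.re < 0 ∧ d.2.re < 0)
    (hrect : FeedbackRectifiable A₁ A₂ B₁ B₂ D) :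
    ∃ (F₁ F₂ : Matrix (Fin p) (Fin n) ℝ) (P : Matrix (Fin n) (Fin n) ℂ), P.PosDef ∧
      (-((mapC (A₁ + B₁ * F₁))ᴴ * P + P * mapC (A₁ + B₁ * F₁))).PosDef ∧
      (-((mapC (A₂ + B₂ * F₂))ᴴ * P + P * mapC (A₂ + B₂ * F₂))).PosDef := by
  obtain ⟨F₁, F₂, lm, v, hmem, hli, h1, h2⟩ := hrect
  set V : Matrix (Fin n) (Fin n) ℂ := (Matrix.of v)ᵀ with hVdef
  have hVu : IsUnit V := Matrix.linearIndependent_cols_iff_isUnit.mp hli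
  have hVd : IsUnit V.det := (Matrix.isUnit_iff_isUnit_det V).mp hVu
  have hVinvu : IsUnit V⁻¹ := Matrix.isUnit_nonsing_inv_iff.mpr hVu
  refine ⟨F₁, F₂, V⁻¹ᴴ * V⁻¹, ?_, ?_, ?_⟩
  · have := posdef_conj (Matrix.PosDef.one (n := Fin n) (R := ℂ)) hVinvu
    simpa using this
  · rw [lyap_eq _ V (fun i => (lm i).1) hVu (eigen_to_mul _ v _ h1)]
    refine posdef_conj (Matrix.PosDef.diagonal fun i => ?_) hVinvu
    have hre := (hD _ (hmem i)).1
    have : star (lm i).1 + (lm i).1 = ((2 * (lm i).1.re : ℝ) : ℂ) := by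
      rw [Complex.star_def, add_comm]; exact Complex.add_conj _
    rw [this, ← Complex.ofReal_neg, Complex.zero_lt_real]
    linarith
  · rw [lyap_eq _ V (fun i => (lm i).2) hVu (eigen_to_mul _ v _ h2)]
    refine posdef_conj (Matrix.PosDef.diagonal fun i => ?_) hVinvu
    have hre := (hD _ (hmem i)).2
    have : star (lm i).2 + (lm i).2 = ((2 * (lm i).2.re : ℝ) : ℂ) := by
      rw [Complex.star_def, add_comm]; exact Complex.add_conj _
    rw [this, ← Complex.ofReal_neg, Complex.zero_lt_real]
    linarith
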